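/- There exists a constant C > 0 such that for all integers n ≥ 4 and all x ∈ [1, √n], |(1 − x/n)^{n−3} − e^{−x}(1 + (3x − x²/2)/n)| ≤ C n⁻² (x² + x⁴) e^{−x}. -/

import Mathlib

open Real

lemma exp_le_quad_of_nonpos {t : ℝ} (ht : t ≤ 0) : Real.exp t ≤ 1 + t + t ^ 2 / 2 := by
  have hf : ∀ s : ℝ, HasDerivAt (fun s => 1 + s + s ^ 2 / 2 - Real.exp s)
      (1 + s - Real.exp s) s := by
    intro s
    have h := (((hasDerivAt_id s).const_add 1).add ((hasDerivAt_pow 2 s).div_const 2)).sub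
      (Real.hasDerivAt_exp s)
    refine h.congr_deriv ?_
    simp
  have hanti : Antitone (fun s => 1 + s + s ^ 2 / 2 - Real.exp s) := by
    apply antitone_of_deriv_nonpos (fun s => (hf s).differentiableAt)
    intro s
    rw [(hf s).deriv]
    nlinarith [Real.add_one_le_exp s]
  have := hanti ht
  simp at this
  linarith

lemma exp_le_quad_of_nonneg {t : ℝ} (ht : 0 ≤ t) :
    Real.exp t ≤ 1 + t + t ^ 2 / 2 * Real.exp t := by
  have hf : ∀ s : ℝ, HasDerivAt (fun s => s ^ 2 / 2 * Real.exp s + 1 + s - Real.exp s)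
      (s * Real.exp s + s ^ 2 / 2 * Real.exp s + 1 - Real.exp s) s := by
    intro s
    have h1 : HasDerivAt (fun s : ℝ => s ^ 2 / 2) s s := by
      have := (hasDerivAt_pow 2 s).div_const 2
      simpa using this
    have h := (((h1.mul (Real.hasDerivAt_exp s)).add_const 1).add (hasDerivAt_id s)).sub
      (Real.hasDerivAt_exp s)
    exact h
  have hmono : MonotoneOn (fun s => s ^ 2 / 2 * Real.exp s + 1 + s - Real.exp s) (Set.Ici 0) := by
    apply monotoneOn_of_deriv_nonneg (convex_Ici 0)
      (Continuous.continuousOn (by continuity))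
    · intro s hs
      exact ((hf s).differentiableAt).differentiableWithinAt
    · intro s hs
      rw [(hf s).deriv]
      simp only [interior_Ici, Set.mem_Ioi] at hs
      have h1 : Real.exp s - s * Real.exp s ≤ 1 := by
        have h2 := Real.add_one_le_exp (-s)
        have hm : Real.exp (-s) * Real.exp s = 1 := by
          rw [← Real.exp_add]; simp
        nlinarith [Real.exp_pos s]
      nlinarith [Real.exp_pos s, sq_nonneg s]
  have := hmono (Set.self_mem_Ici) (Set.mem_Ici.mpr ht) ht
  simp at this
  linarith

lemma abs_exp_sub_one_sub_le' (t : ℝ) :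
    |Real.exp t - 1 - t| ≤ t ^ 2 / 2 * Real.exp |t| := by
  have hlow : 0 ≤ Real.exp t - 1 - t := by
    have := Real.add_one_le_exp t; linarith
  rw [abs_of_nonneg hlow]
  rcases le_or_gt 0 t with h | h
  · rw [abs_of_nonneg h]
    have := exp_le_quad_of_nonneg h
    linarith
  · rw [abs_of_neg h]
    have h1 := exp_le_quad_of_nonpos h.le
    have h2 : (1 : ℝ) ≤ Real.exp (-t) := Real.one_le_exp (by linarith)
    nlinarith [sq_nonneg t]

set_option maxHeartbeats 2000000 in
/-- Uniform second-order Taylor expansion (22): there is `C > 0` such that for all `n ≥ 4`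
and all `x ∈ [1, √n]`,
`|(1 − x/n)^(n−3) − e^(−x) (1 + (3x − x²/2)/n)| ≤ C n⁻² (x² + x⁴) e^(−x)`. -/
theorem lecam2d_taylor_expansion :
    ∃ C : ℝ, 0 < C ∧ ∀ n : ℕ, 4 ≤ n → ∀ x : ℝ, x ∈ Set.Icc 1 (Real.sqrt n) →
      |(1 - x / n) ^ (n - 3) - Real.exp (-x) * (1 + (3 * x - x ^ 2 / 2) / n)| ≤
        C / (n : ℝ) ^ 2 * (x ^ 2 + x ^ 4) * Real.exp (-x) := by
  refine ⟨10000, by norm_num, ?_⟩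
  intro n hn x hx
  obtain ⟨hx1, hxs⟩ := hx
  -- basic facts
  have hn4 : (4 : ℝ) ≤ n := by exact_mod_cast hn
  have hn0 : (0 : ℝ) < n := by linarith
  have hx0 : (0 : ℝ) < x := by linarith
  have hsq : Real.sqrt n * Real.sqrt n = n := Real.mul_self_sqrt hn0.le
  have hsn2 : (2 : ℝ) ≤ Real.sqrt n := by
    rw [show (2:ℝ) = Real.sqrt 4 by rw [show (4:ℝ) = 2^2 by norm_num, Real.sqrt_sq]; norm_num]
    exact Real.sqrt_le_sqrt hn4
  have hx2n : x ^ 2 ≤ n := by nlinarith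
  have hxn : x ≤ n := by nlinarith
  -- u = x/n, opaque
  obtain ⟨u, hu_def⟩ : ∃ u : ℝ, u = x / n := ⟨_, rfl⟩
  have hu0 : 0 < u := by rw [hu_def]; exact div_pos hx0 hn0
  have hu_half : u ≤ 1 / 2 := by
    rw [hu_def, div_le_div_iff₀ hn0 (by norm_num)]
    nlinarith
  have h1u : (0 : ℝ) < 1 - u := by linarith
  -- the logarithm remainder
  obtain ⟨L, hL_def⟩ : ∃ L : ℝ, L = Real.log (1 - u) := ⟨_, rfl⟩
  have hlog : |L + (u + u ^ 2 / 2)| ≤ 2 * u ^ 3 := by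
    have habs : |u| < 1 := by rw [abs_of_pos hu0]; linarith
    have h := Real.abs_log_sub_add_sum_range_le habs 2
    simp [Finset.sum_range_succ] at h
    rw [abs_of_pos hu0] at h
    have h2 : u ^ 3 / (1 - u) ≤ 2 * u ^ 3 := by
      rw [div_le_iff₀ h1u]
      nlinarith [pow_pos hu0 3]
    calc |L + (u + u ^ 2 / 2)| = |(u + u ^ 2 / 2) + Real.log (1 - u)| := by
          rw [hL_def, add_comm]
      _ ≤ u ^ 3 / (1 - u) := by
          convert h using 2
          ring
      _ ≤ 2 * u ^ 3 := h2
  -- rewrite the power as an exponential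
  obtain ⟨m, hm_def⟩ : ∃ m : ℕ, m = n - 3 := ⟨_, rfl⟩
  have hm : (m : ℝ) = (n : ℝ) - 3 := by
    rw [hm_def, Nat.cast_sub (by omega)]; norm_num
  have hmn : (m : ℝ) ≤ n := by rw [hm]; linarith
  have hm0 : (0 : ℝ) ≤ m := by positivity
  have hpow : (1 - x / n) ^ (n - 3) = Real.exp ((m : ℝ) * L) := by
    rw [hL_def, hm_def, ← hu_def, ← Real.log_pow, Real.exp_log (pow_pos h1u _)]
  -- decomposition
  obtain ⟨a, ha_def⟩ : ∃ a : ℝ, a = (3 * x - x ^ 2 / 2) / n := ⟨_, rfl⟩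
  obtain ⟨δ, hδ_def⟩ : ∃ δ : ℝ, δ = (m : ℝ) * L + x := ⟨_, rfl⟩
  have hexpδ : Real.exp ((m : ℝ) * L) = Real.exp (-x) * Real.exp δ := by
    rw [hδ_def, ← Real.exp_add]; ring_nf
  -- bound on E = δ - a
  have hE : |δ - a| ≤ (2 * x ^ 3 + 3 / 2 * x ^ 2) / n ^ 2 := by
    have hkey : δ - a = (m : ℝ) * (L + (u + u ^ 2 / 2)) + 3 / 2 * x ^ 2 / n ^ 2 := by
      rw [hδ_def, ha_def, hm, hu_def]
      field_simp
      ring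
    rw [hkey]
    have h1 : |(m : ℝ) * (L + (u + u ^ 2 / 2))| ≤ 2 * x ^ 3 / n ^ 2 := by
      rw [abs_mul, abs_of_nonneg hm0]
      calc (m : ℝ) * |L + (u + u ^ 2 / 2)| ≤ (n : ℝ) * (2 * u ^ 3) := by
            apply mul_le_mul hmn hlog (abs_nonneg _) hn0.le
        _ = 2 * x ^ 3 / n ^ 2 := by
            rw [hu_def]; field_simp
    calc |(m : ℝ) * (L + (u + u ^ 2 / 2)) + 3 / 2 * x ^ 2 / n ^ 2|
        ≤ |(m : ℝ) * (L + (u + u ^ 2 / 2))| + |3 / 2 * x ^ 2 / n ^ 2| := abs_add_le _ _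
      _ ≤ 2 * x ^ 3 / n ^ 2 + 3 / 2 * x ^ 2 / n ^ 2 := by
          refine add_le_add h1 ?_
          rw [abs_of_nonneg (by positivity)]
      _ = (2 * x ^ 3 + 3 / 2 * x ^ 2) / n ^ 2 := by ring
  -- auxiliary polynomial bounds
  have hx34 : x ^ 3 ≤ x ^ 4 := pow_le_pow_right₀ hx1 (by norm_num)
  have hx4n : x ^ 4 ≤ (n : ℝ) ^ 2 := by nlinarith
  have hn_sq : (n : ℝ) ≤ (n : ℝ) ^ 2 := by nlinarith
  obtain ⟨P, hP_def⟩ : ∃ P : ℝ, P = (x ^ 2 + x ^ 4) / n ^ 2 := ⟨_, rfl⟩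
  have hP0 : 0 ≤ P := by rw [hP_def]; positivity
  have hPle : P ≤ 2 := by
    rw [hP_def, div_le_iff₀ (by positivity)]
    linarith
  have hE2 : |δ - a| ≤ 2 * P := by
    refine hE.trans ?_
    rw [hP_def, show 2 * ((x ^ 2 + x ^ 4) / (n:ℝ) ^ 2) = 2 * (x ^ 2 + x ^ 4) / (n:ℝ) ^ 2 by ring]
    gcongr ?_ / _
    nlinarith
  have hEsmall : |δ - a| ≤ 4 := by linarith
  -- bound on a
  have ha_bound : |a| ≤ (3 * x + x ^ 2 / 2) / n := by
    rw [ha_def, abs_div, abs_of_pos hn0]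
    gcongr ?_ / _
    rw [abs_le]; constructor <;> nlinarith
  have ha_small : |a| ≤ 2 := by
    refine ha_bound.trans ?_
    rw [div_le_iff₀ hn0]
    nlinarith
  have hδ_small : |δ| ≤ 6 := by
    calc |δ| = |(δ - a) + a| := by ring_nf
      _ ≤ |δ - a| + |a| := abs_add_le _ _
      _ ≤ 6 := by linarith
  -- bound on δ²
  have hδsq : δ ^ 2 ≤ 42 * P := by
    have h2 : a ^ 2 ≤ 13 * P := by
      have h3 : a ^ 2 ≤ ((3 * x + x ^ 2 / 2) / n) ^ 2 := by
        rw [← sq_abs a]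
        exact pow_le_pow_left₀ (abs_nonneg a) ha_bound 2
      refine h3.trans ?_
      rw [div_pow, hP_def,
        show 13 * ((x ^ 2 + x ^ 4) / (n:ℝ) ^ 2) = 13 * (x ^ 2 + x ^ 4) / (n:ℝ) ^ 2 by ring]
      gcongr ?_ / _
      nlinarith
    have h4 : (δ - a) ^ 2 ≤ 8 * P := by
      rw [← sq_abs (δ - a)]
      calc |δ - a| ^ 2 = |δ - a| * |δ - a| := sq (|δ - a|)
        _ ≤ 4 * (2 * P) := mul_le_mul hEsmall hE2 (abs_nonneg _) (by norm_num)
        _ = 8 * P := by ring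
    nlinarith [sq_nonneg (δ - 2 * a)]
  -- exponential bound
  have hexp6 : Real.exp |δ| ≤ 405 := by
    calc Real.exp |δ| ≤ Real.exp 6 := Real.exp_le_exp.mpr hδ_small
      _ = (Real.exp 1) ^ 6 := by rw [← Real.exp_nat_mul]; norm_num
      _ ≤ 2.7182818286 ^ 6 := by
          apply pow_le_pow_left₀ (Real.exp_pos 1).le Real.exp_one_lt_d9.le
      _ ≤ 405 := by norm_num
  have hmain : |Real.exp δ - 1 - a| ≤ 10000 * P := by
    calc |Real.exp δ - 1 - a| = |(Real.exp δ - 1 - δ) + (δ - a)| := by ring_nf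
      _ ≤ |Real.exp δ - 1 - δ| + |δ - a| := abs_add_le _ _
      _ ≤ δ ^ 2 / 2 * Real.exp |δ| + 2 * P :=
          add_le_add (abs_exp_sub_one_sub_le' δ) hE2
      _ ≤ (42 * P) / 2 * 405 + 2 * P := by
          refine add_le_add ?_ le_rfl
          apply mul_le_mul (by linarith) hexp6 (Real.exp_pos _).le (by linarith)
      _ ≤ 10000 * P := by linarith
  -- conclude
  rw [hpow, hexpδ, ← ha_def]
  have hfinal : |Real.exp (-x) * Real.exp δ - Real.exp (-x) * (1 + a)|
      = Real.exp (-x) * |Real.exp δ - 1 - a| := by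
    rw [← mul_sub, abs_mul, abs_of_pos (Real.exp_pos _)]
    congr 1
    ring_nf
  rw [hfinal]
  calc Real.exp (-x) * |Real.exp δ - 1 - a|
      ≤ Real.exp (-x) * (10000 * P) := by
        apply mul_le_mul_of_nonneg_left hmain (Real.exp_pos _).le
    _ = 10000 / (n : ℝ) ^ 2 * (x ^ 2 + x ^ 4) * Real.exp (-x) := by
        rw [hP_def]; ring
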